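/- arXiv:2208.04777 — 2 statements merged into one kernel-verified Lean document; each statement's English description precedes it below -/
import Mathlib

section
/- Let 𝒵 be a finite nonempty set, M ≥ 1, d ≥ 1, let z : Fin M → 𝒵 with empirical distribution H_z, and let h : (Fin d → 𝒵) → Fin d → ℝ be any function. Then for every j ∈ Fin M: (1/M^{d-1}) · Σ_{k ∈ Fin d} Σ_{x : Fin d → Fin M} 1{x k = j} · h(z ∘ x)(k) = Σ_{z̄ : Fin d → 𝒵} Σ_{u ∈ Fin d} 1{z̄ u = z j} · (∏_{i ∈ Fin d, i ≠ u} H_z(z̄ i)) · h(z̄)(u), and this quantity also equals (1/H_z(z j)) · Σ_{z̄ : Fin d → 𝒵} Σ_{u ∈ Fin d} 1{z̄ u = z j} · (∏_{i ∈ Fin d} H_z(z̄ i)) · h(z̄)(u), where H_z(z j) ≥ 1/M > 0 automatically. -/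
open Finset

/-- The per-queue arrival-rate identity: the normalized count of agent
state-action pairs directing jobs to queue `j` equals an expression purely in
terms of the empirical queue-state distribution `Hz`. -/
theorem arrival_rate_empirical_identity
    (𝒵 : Type*) [Fintype 𝒵] [Nonempty 𝒵] [DecidableEq 𝒵]
    (M d : ℕ) (hM : 1 ≤ M) (hd : 1 ≤ d)
    (z : Fin M → 𝒵)
    (Hz : 𝒵 → ℝ)
    (hHz : ∀ s, Hz s = ((Finset.univ.filter (fun j : Fin M => z j = s)).card : ℝ) / M)
    (h : (Fin d → 𝒵) → Fin d → ℝ) (j : Fin M) :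
    (0 : ℝ) < 1 / M ∧ 1 / (M : ℝ) ≤ Hz (z j) ∧
    (1 / (M : ℝ) ^ (d - 1)) *
        ∑ k : Fin d, ∑ x : Fin d → Fin M,
          (if x k = j then (1 : ℝ) else 0) * h (z ∘ x) k
      = ∑ zbar : Fin d → 𝒵, ∑ u : Fin d,
          (if zbar u = z j then (1 : ℝ) else 0) *
            (∏ i ∈ Finset.univ.erase u, Hz (zbar i)) * h zbar u ∧
    (∑ zbar : Fin d → 𝒵, ∑ u : Fin d,
          (if zbar u = z j then (1 : ℝ) else 0) *
            (∏ i ∈ Finset.univ.erase u, Hz (zbar i)) * h zbar u)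
      = (1 / Hz (z j)) *
          ∑ zbar : Fin d → 𝒵, ∑ u : Fin d,
            (if zbar u = z j then (1 : ℝ) else 0) *
              (∏ i : Fin d, Hz (zbar i)) * h zbar u := by
  classical
  have hMpos : (0:ℝ) < M := by
    have : 0 < M := hM
    exact_mod_cast this
  set N : 𝒵 → ℕ := fun s => (Finset.univ.filter (fun a : Fin M => z a = s)).card with hNdef
  have hHzN : ∀ s, Hz s = (N s : ℝ) / M := hHz
  have hNj : 1 ≤ N (z j) := by
    apply Finset.card_pos.mpr
    exact ⟨j, by simp⟩
  have hHzj : 1 / (M : ℝ) ≤ Hz (z j) := by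
    rw [hHzN]
    gcongr
    exact_mod_cast hNj
  have hHzjpos : 0 < Hz (z j) := lt_of_lt_of_le (by positivity) hHzj
  -- counting lemma
  have hcount : ∀ (k : Fin d) (zbar : Fin d → 𝒵),
      ((Finset.univ.filter (fun x : Fin d → Fin M => z ∘ x = zbar ∧ x k = j)).card : ℝ)
        = (if zbar k = z j then (1:ℝ) else 0) *
            ∏ i ∈ Finset.univ.erase k, (N (zbar i) : ℝ) := by
    intro k zbar
    set t : Fin d → Finset (Fin M) := fun i =>
      if i = k then ({j} : Finset (Fin M)).filter (fun a => z a = zbar i)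
      else Finset.univ.filter (fun a => z a = zbar i) with ht
    have hset : Finset.univ.filter (fun x : Fin d → Fin M => z ∘ x = zbar ∧ x k = j)
        = Fintype.piFinset t := by
      ext x
      simp only [Fintype.mem_piFinset, Finset.mem_filter, Finset.mem_univ, true_and, ht,
        funext_iff, Function.comp_apply]
      constructor
      · rintro ⟨h1, h2⟩ i
        by_cases hik : i = k
        · subst hik
          rw [if_pos rfl, Finset.mem_filter, Finset.mem_singleton]
          exact ⟨h2, h1 i⟩
        · rw [if_neg hik, Finset.mem_filter]
          exact ⟨Finset.mem_univ _, h1 i⟩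
      · intro hx
        have hk := hx k
        rw [if_pos rfl, Finset.mem_filter, Finset.mem_singleton] at hk
        refine ⟨fun i => ?_, hk.1⟩
        have hxi := hx i
        by_cases hik : i = k
        · subst hik; exact hk.2
        · rw [if_neg hik, Finset.mem_filter] at hxi
          exact hxi.2
    rw [hset, Fintype.card_piFinset]
    push_cast
    rw [← Finset.mul_prod_erase Finset.univ (fun i => ((t i).card : ℝ)) (Finset.mem_univ k)]
    congr 1
    · simp only [ht, if_pos rfl, Finset.filter_singleton]
      by_cases hc : z j = zbar k
      · rw [if_pos hc, if_pos hc.symm]; simp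
      · rw [if_neg hc, if_neg (fun hh => hc hh.symm)]; simp
    · apply Finset.prod_congr rfl
      intro i hi
      have hik : i ≠ k := Finset.ne_of_mem_erase hi
      simp [ht, hik, hNdef]
  -- fiberwise decomposition
  have hfiber : ∀ k : Fin d,
      ∑ x : Fin d → Fin M, (if x k = j then (1:ℝ) else 0) * h (z ∘ x) k
        = ∑ zbar : Fin d → 𝒵, (if zbar k = z j then (1:ℝ) else 0) *
            (∏ i ∈ Finset.univ.erase k, (N (zbar i) : ℝ)) * h zbar k := by
    intro k
    rw [← Finset.sum_fiberwise Finset.univ (fun x : Fin d → Fin M => z ∘ x)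
      (fun x => (if x k = j then (1:ℝ) else 0) * h (z ∘ x) k)]
    apply Finset.sum_congr rfl
    intro zbar _
    have step1 : ∑ x ∈ Finset.univ.filter (fun x : Fin d → Fin M => z ∘ x = zbar),
        (if x k = j then (1:ℝ) else 0) * h (z ∘ x) k
        = ∑ x ∈ Finset.univ.filter (fun x : Fin d → Fin M => z ∘ x = zbar),
        (if x k = j then (1:ℝ) else 0) * h zbar k := by
      apply Finset.sum_congr rfl
      intro x hx
      simp only [Finset.mem_filter] at hx
      rw [hx.2]
    rw [step1, ← Finset.sum_mul]
    have step2 : ∑ x ∈ Finset.univ.filter (fun x : Fin d → Fin M => z ∘ x = zbar),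
        (if x k = j then (1:ℝ) else 0)
        = ((Finset.univ.filter (fun x : Fin d → Fin M => z ∘ x = zbar ∧ x k = j)).card : ℝ) := by
      rw [Finset.sum_boole, Finset.filter_filter]
    rw [step2, hcount k zbar]
  -- product conversion
  have hprod : ∀ (k : Fin d) (zbar : Fin d → 𝒵),
      ∏ i ∈ Finset.univ.erase k, Hz (zbar i)
        = (1/(M:ℝ)^(d-1)) * ∏ i ∈ Finset.univ.erase k, (N (zbar i) : ℝ) := by
    intro k zbar
    have hcard : (Finset.univ.erase k).card = d - 1 := by
      rw [Finset.card_erase_of_mem (Finset.mem_univ k), Finset.card_univ, Fintype.card_fin]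
    rw [Finset.prod_congr rfl (fun i _ => hHzN (zbar i)), Finset.prod_div_distrib,
      Finset.prod_const, hcard]
    ring
  have main : (1 / (M : ℝ) ^ (d - 1)) *
        ∑ k : Fin d, ∑ x : Fin d → Fin M,
          (if x k = j then (1 : ℝ) else 0) * h (z ∘ x) k
      = ∑ zbar : Fin d → 𝒵, ∑ u : Fin d,
          (if zbar u = z j then (1 : ℝ) else 0) *
            (∏ i ∈ Finset.univ.erase u, Hz (zbar i)) * h zbar u := by
    rw [Finset.sum_congr rfl (fun k _ => hfiber k), Finset.mul_sum]
    simp_rw [Finset.mul_sum]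
    rw [Finset.sum_comm]
    apply Finset.sum_congr rfl
    intro zbar _
    apply Finset.sum_congr rfl
    intro u _
    rw [hprod u zbar]
    ring
  refine ⟨by positivity, hHzj, main, ?_⟩
  have key : ∀ (zbar : Fin d → 𝒵) (u : Fin d),
      (if zbar u = z j then (1:ℝ) else 0) * (∏ i : Fin d, Hz (zbar i)) * h zbar u
        = Hz (z j) * ((if zbar u = z j then (1:ℝ) else 0) *
            (∏ i ∈ Finset.univ.erase u, Hz (zbar i)) * h zbar u) := by
    intro zbar u
    by_cases hcase : zbar u = z j
    · rw [if_pos hcase,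
        ← Finset.mul_prod_erase Finset.univ (fun i => Hz (zbar i)) (Finset.mem_univ u), hcase]
      ring
    · simp [hcase]
  have : ∑ zbar : Fin d → 𝒵, ∑ u : Fin d,
      (if zbar u = z j then (1:ℝ) else 0) * (∏ i : Fin d, Hz (zbar i)) * h zbar u
      = Hz (z j) * ∑ zbar : Fin d → 𝒵, ∑ u : Fin d,
          (if zbar u = z j then (1:ℝ) else 0) *
            (∏ i ∈ Finset.univ.erase u, Hz (zbar i)) * h zbar u := by
    rw [Finset.mul_sum]
    apply Finset.sum_congr rfl
    intro zbar _
    rw [Finset.mul_sum]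
    exact Finset.sum_congr rfl fun u _ => key zbar u
  rw [this, ← mul_assoc, one_div, inv_mul_cancel₀ (ne_of_gt hHzjpos), one_mul]
end

section
/- Let Q be a real n×n matrix and r ∈ ℝⁿ. Define the (n+1)×(n+1) real matrix Q̄ whose top-left n×n block is Q, whose bottom row is (r₁, …, r_n, 0), and whose remaining entries (the first n entries of the last column) are 0. Then for every τ ∈ ℝ and every v ∈ ℝⁿ, exp(τ·Q̄) applied to the vector (v, 0) ∈ ℝ^{n+1} equals the vector whose first n coordinates are exp(τ·Q)·v and whose last coordinate is ∫₀^τ ⟨r, exp(s·Q)·v⟩ ds. -/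
open Matrix NormedSpace

attribute [local instance] Matrix.linftyOpNormedRing Matrix.linftyOpNormedAlgebra

section Aux

/-- `M ↦ M.mulVec w` as a continuous linear map. -/
noncomputable def mulVecCLM (ι : Type*) [Fintype ι] [DecidableEq ι] (w : ι → ℝ) :
    Matrix ι ι ℝ →L[ℝ] (ι → ℝ) :=
  LinearMap.toContinuousLinearMap
    { toFun := fun M => M.mulVec w
      map_add' := fun A B => Matrix.add_mulVec A B w
      map_smul' := fun c A => Matrix.smul_mulVec c A w }

@[simp] lemma mulVecCLM_apply (ι : Type*) [Fintype ι] [DecidableEq ι] (w : ι → ℝ)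
    (M : Matrix ι ι ℝ) : mulVecCLM ι w M = M.mulVec w := rfl

lemma exp_mulVec_eq_tsum (ι : Type*) [Fintype ι] [DecidableEq ι] (w : ι → ℝ)
    (M : Matrix ι ι ℝ) :
    (exp M).mulVec w = ∑' k : ℕ, (k.factorial : ℝ)⁻¹ • (M ^ k).mulVec w := by
  have h := (mulVecCLM ι w).map_tsum
    (expSeries_summable' M : Summable fun k : ℕ => (k.factorial : ℝ)⁻¹ • M ^ k)
  simpa [exp_eq_tsum (𝕂 := ℝ)] using h

lemma summable_exp_mulVec (ι : Type*) [Fintype ι] [DecidableEq ι] (w : ι → ℝ)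
    (M : Matrix ι ι ℝ) :
    Summable fun k : ℕ => (k.factorial : ℝ)⁻¹ • (M ^ k).mulVec w := by
  have := (expSeries_summable' M : Summable fun k : ℕ => (k.factorial : ℝ)⁻¹ • M ^ k).map
    (mulVecCLM ι w) (mulVecCLM ι w).continuous
  simpa [Function.comp_def, Matrix.smul_mulVec] using this

end Aux

/-- Augmented-matrix identity for accumulated drops: if `Q̄` is the block
matrix with top-left block `Q`, bottom row `(r, 0)` and zeros elsewhere, then
`exp(τ Q̄) (v, 0)` has first `n` coordinates `exp(τ Q) v` and last coordinate
`∫₀^τ ⟨r, exp(s Q) v⟩ ds`. -/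
theorem exp_augmented_block_matrix
    (n : ℕ) (Q : Matrix (Fin n) (Fin n) ℝ) (r : Fin n → ℝ)
    (Qbar : Matrix (Fin n ⊕ Unit) (Fin n ⊕ Unit) ℝ)
    (hQbar : Qbar = Matrix.fromBlocks Q 0 (Matrix.replicateRow Unit r) 0)
    (τ : ℝ) (v : Fin n → ℝ) :
    (NormedSpace.exp (τ • Qbar)).mulVec (Sum.elim v fun _ => (0 : ℝ))
      = Sum.elim ((NormedSpace.exp (τ • Q)).mulVec v)
          (fun _ => ∫ s in (0 : ℝ)..τ, r ⬝ᵥ (NormedSpace.exp (s • Q)).mulVec v) := by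
  set w : Fin n ⊕ Unit → ℝ := Sum.elim v fun _ => 0 with hw
  have hpow : ∀ k : ℕ, ∀ i, ((Qbar ^ k).mulVec w) (Sum.inl i) = ((Q ^ k).mulVec v) i := by
    intro k
    induction k with
    | zero => intro i; simp [w]
    | succ k ih =>
      intro i
      have h1 : (Qbar ^ (k+1)).mulVec w = Qbar.mulVec ((Qbar ^ k).mulVec w) := by
        rw [pow_succ', ← Matrix.mulVec_mulVec]
      rw [h1]
      have h2 : ∀ u : Fin n ⊕ Unit → ℝ, (Qbar.mulVec u) (Sum.inl i)
          = (Q.mulVec (fun j => u (Sum.inl j))) i := by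
        intro u
        simp [hQbar, Matrix.mulVec, dotProduct, Fintype.sum_sum_type,
          Matrix.fromBlocks]
      rw [h2]
      have h3 : (fun j => ((Qbar ^ k).mulVec w) (Sum.inl j)) = (Q ^ k).mulVec v :=
        funext ih
      rw [h3, Matrix.mulVec_mulVec, ← pow_succ']
  have hTop : ∀ t : ℝ, ∀ i, ((exp (t • Qbar)).mulVec w) (Sum.inl i)
      = ((exp (t • Q)).mulVec v) i := by
    intro t i
    rw [exp_mulVec_eq_tsum, exp_mulVec_eq_tsum]
    rw [tsum_apply (summable_exp_mulVec _ w (t • Qbar)),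
        tsum_apply (summable_exp_mulVec _ v (t • Q))]
    congr 1
    funext k
    simp only [smul_pow, Pi.smul_apply, Matrix.smul_mulVec, smul_eq_mul]
    rw [hpow k i]
  have hBotStep : ∀ u : Fin n ⊕ Unit → ℝ, (Qbar.mulVec u) (Sum.inr ())
      = r ⬝ᵥ (fun j => u (Sum.inl j)) := by
    intro u
    simp [hQbar, Matrix.mulVec, dotProduct, Fintype.sum_sum_type, Matrix.fromBlocks]
  have hBotDeriv : ∀ t : ℝ, HasDerivAt
      (fun u : ℝ => ((exp (u • Qbar)).mulVec w) (Sum.inr ()))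
      (r ⬝ᵥ (exp (t • Q)).mulVec v) t := by
    intro t
    have hd := hasDerivAt_exp_smul_const' Qbar t
    set L : Matrix (Fin n ⊕ Unit) (Fin n ⊕ Unit) ℝ →L[ℝ] ℝ :=
      (ContinuousLinearMap.proj (Sum.inr ())).comp (mulVecCLM _ w) with hL
    have := L.hasFDerivAt.comp_hasDerivAt t hd
    have heq : L (Qbar * exp (t • Qbar)) = r ⬝ᵥ (exp (t • Q)).mulVec v := by
      simp only [hL, ContinuousLinearMap.comp_apply, mulVecCLM_apply,
        ContinuousLinearMap.proj_apply, ← Matrix.mulVec_mulVec]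
      rw [hBotStep]
      congr 1
      funext j
      exact hTop t j
    replace this := this.congr_deriv heq
    exact this
  have hcontQ : Continuous fun s : ℝ => exp (s • Q) := by
    rw [continuous_iff_continuousAt]
    exact fun s => (hasDerivAt_exp_smul_const' Q s).continuousAt
  have hcont : Continuous fun s : ℝ => r ⬝ᵥ (exp (s • Q)).mulVec v := by
    have h1 : Continuous fun s : ℝ => ∑ j, r j * ((exp (s • Q)).mulVec v j) := by
      refine continuous_finset_sum _ fun j _ => continuous_const.mul ?_
      exact (continuous_apply j).comp ((mulVecCLM _ v).continuous.comp hcontQ)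
    simpa [dotProduct] using h1
  have hInt := intervalIntegral.integral_eq_sub_of_hasDerivAt
    (f := fun u : ℝ => ((exp (u • Qbar)).mulVec w) (Sum.inr ()))
    (fun t _ => hBotDeriv t) (hcont.intervalIntegrable 0 τ)
  have hzero : ((exp ((0:ℝ) • Qbar)).mulVec w) (Sum.inr ()) = 0 := by
    rw [zero_smul, exp_zero]
    simp [w]
  simp only [hzero, sub_zero] at hInt
  funext x
  cases x with
  | inl i => simpa using hTop τ i
  | inr u => cases u; simpa using hInt.symm
end
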